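/- If F ⊆ C([n],r)^d is a monotone family with r ≥ 1, then its shadow ∂F ⊆ C([n],r−1)^d is also a monotone family. -/

import Mathlib

open Finset

/-- The shadow of a `d`-dimensional uniform family: all tuples obtained from a tuple in `F`
by removing one element from each coordinate. -/
def multiShadow {α : Type*} [DecidableEq α] (d : ℕ) (F : Set (Fin d → Finset α)) :
    Set (Fin d → Finset α) :=
  {T | ∃ S ∈ F, ∃ x : Fin d → α, (∀ i, x i ∈ S i) ∧ ∀ i, T i = (S i).erase (x i)}

/-- `C([n], r)`: the `r`-element subsets of `[n] = {1, …, n}`. -/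
def uniformOn (n r : ℕ) : Set (Finset ℕ) := {A | A ⊆ Finset.Icc 1 n ∧ A.card = r}

/-- `G` is an initial segment of the colexicographic order on `C([n], r)`. -/
def IsColexInitSeg (n r : ℕ) (G : Set (Finset ℕ)) : Prop :=
  G ⊆ uniformOn n r ∧
    ∀ A ∈ G, ∀ B ∈ uniformOn n r, toColex B ≤ toColex A → B ∈ G

/-- A `d`-dimensional family is monotone if every 1-dimensional section (obtained by fixing
all but one of the coordinates) is an initial segment of the colexicographic order. -/
def IsMonotoneFamily (n r d : ℕ) (F : Set (Fin d → Finset ℕ)) : Prop :=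
  ∀ (j : Fin d) (S : Fin d → Finset ℕ),
    IsColexInitSeg n r {A | Function.update S j A ∈ F}

private lemma key_insert (B C : Finset ℕ) (hcard : B.card + 1 = C.card)
    (hlt : toColex B < toColex C) :
    ∃ b ∈ C, b ∉ B ∧ toColex (insert b B) ≤ toColex C := by
  classical
  set D : Finset ℕ := C \ B with hD
  set E : Finset ℕ := B \ C with hE
  have hc1 : D.card + (C ∩ B).card = C.card := card_sdiff_add_card_inter C B
  have hc2 : E.card + (B ∩ C).card = B.card := card_sdiff_add_card_inter B C
  have hc3 : (C ∩ B).card = (B ∩ C).card := by rw [inter_comm]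
  have hcardDE : D.card = E.card + 1 := by omega
  have hDne : D.Nonempty := by rw [← card_pos]; omega
  set b : ℕ := D.min' hDne with hb
  have hbD : b ∈ D := min'_mem _ _
  have hbC : b ∈ C := (mem_sdiff.1 hbD).1
  have hbB : b ∉ B := (mem_sdiff.1 hbD).2
  refine ⟨b, hbC, hbB, ?_⟩
  rw [← geomSum_le_geomSum_iff_toColex_le_toColex (le_refl 2)]
  rw [← geomSum_lt_geomSum_iff_toColex_lt_toColex (le_refl 2)] at hlt
  have hBsplit : ∑ k ∈ B, 2 ^ k = (∑ k ∈ B ∩ C, 2 ^ k) + ∑ k ∈ E, 2 ^ k :=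
    (sum_inter_add_sum_sdiff B C _).symm
  have hCsplit : ∑ k ∈ C, 2 ^ k = (∑ k ∈ B ∩ C, 2 ^ k) + ∑ k ∈ D, 2 ^ k := by
    rw [inter_comm]
    exact (sum_inter_add_sum_sdiff C B _).symm
  rw [hBsplit, hCsplit] at hlt
  rw [sum_insert hbB, hBsplit, hCsplit]
  suffices h : (∑ k ∈ E, 2 ^ k) + 2 ^ b ≤ ∑ k ∈ D, 2 ^ k by omega
  rcases E.eq_empty_or_nonempty with hEe | hEne
  · simp only [hEe, sum_empty, zero_add]
    exact single_le_sum (f := fun k => 2 ^ k) (fun _ _ => Nat.zero_le _) hbD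
  · set M : ℕ := D.max' hDne with hM
    have hMD : M ∈ D := max'_mem _ _
    have hDEdisj : Disjoint D E := disjoint_sdiff.mono_left sdiff_subset
    have hED : ∑ k ∈ E, 2 ^ k < ∑ k ∈ D, 2 ^ k := by omega
    have hEM : ∀ e ∈ E, e < M := by
      intro e he
      by_contra hcon
      push_neg at hcon
      have heD : e ∉ D := disjoint_right.1 hDEdisj he
      have heM : M < e := lt_of_le_of_ne hcon (fun h => heD (h ▸ hMD))
      have h1 : ∑ k ∈ D, 2 ^ k < 2 ^ e :=
        Nat.geomSum_lt le_rfl (fun k hk => lt_of_le_of_lt (le_max' _ _ hk) heM)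
      have h2 : (2:ℕ) ^ e ≤ ∑ k ∈ E, 2 ^ k :=
        single_le_sum (fun _ _ => Nat.zero_le _) he
      omega
    have hbM : b ≠ M := by
      intro h
      have hsub : D ⊆ {b} := by
        intro z hz
        have h1 := min'_le D z hz
        have h2 := le_max' D z hz
        rw [mem_singleton]
        omega
      have := card_le_card hsub
      simp only [card_singleton] at this
      have := card_pos.2 hEne
      omega
    have hbltM : b < M := lt_of_le_of_ne (min'_le D M hMD) hbM
    have hElt : ∑ k ∈ E, 2 ^ k < 2 ^ M := Nat.geomSum_lt le_rfl hEM
    have hDge : 2 ^ b + 2 ^ M ≤ ∑ k ∈ D, 2 ^ k := by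
      have hsub : ({b, M} : Finset ℕ) ⊆ D := by
        intro z hz
        simp only [mem_insert, mem_singleton] at hz
        rcases hz with rfl | rfl
        exacts [hbD, hMD]
      calc 2 ^ b + 2 ^ M = ∑ k ∈ ({b, M} : Finset ℕ), 2 ^ k := by
            rw [sum_pair (Nat.ne_of_lt hbltM)]
        _ ≤ ∑ k ∈ D, 2 ^ k := sum_le_sum_of_subset hsub
    omega

theorem stmt4 (n r d : ℕ) (hr : 1 ≤ r)
    (F : Set (Fin d → Finset ℕ)) (hF : ∀ S ∈ F, ∀ i, S i ∈ uniformOn n r)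
    (hmono : IsMonotoneFamily n r d F) :
    IsMonotoneFamily n (r - 1) d (multiShadow d F) := by
  intro j T
  constructor
  · rintro A ⟨S, hS, x, hx, hT⟩
    have hj : A = (S j).erase (x j) := by
      have := hT j; rwa [Function.update_self] at this
    obtain ⟨hsub, hcardS⟩ := hF S hS j
    constructor
    · rw [hj]; exact (erase_subset _ _).trans hsub
    · rw [hj, card_erase_of_mem (hx j), hcardS]
  · rintro A ⟨S, hS, x, hx, hT⟩ B ⟨hBsub, hBcard⟩ hle
    have hj : A = (S j).erase (x j) := by
      have := hT j; rwa [Function.update_self] at this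
    obtain ⟨hCsub, hCcard⟩ := hF S hS j
    have hAlt : toColex A < toColex (S j) := by
      rw [hj]
      exact Colex.toColex_lt_toColex_of_ssubset (erase_ssubset (hx j))
    have hBlt : toColex B < toColex (S j) := lt_of_le_of_lt hle hAlt
    obtain ⟨b, hbC, hbB, hble⟩ := key_insert B (S j)
      (by rw [hBcard, hCcard]; omega) hBlt
    have hmem : (insert b B) ∈ uniformOn n r := by
      refine ⟨fun z hz => ?_, ?_⟩
      · rcases mem_insert.1 hz with rfl | hz
        · exact hCsub hbC
        · exact hBsub hz
      · rw [card_insert_of_notMem hbB, hBcard]; omega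
    have hSF : S j ∈ {A | Function.update S j A ∈ F} := by
      simp only [Set.mem_setOf_eq, Function.update_eq_self]; exact hS
    have hS' : Function.update S j (insert b B) ∈ F :=
      (hmono j S).2 (S j) hSF (insert b B) hmem hble
    refine ⟨Function.update S j (insert b B), hS', Function.update x j b, fun i => ?_, fun i => ?_⟩
    · rcases eq_or_ne i j with rfl | hij
      · simp
      · simp only [Function.update_of_ne hij]
        exact hx i
    · rcases eq_or_ne i j with rfl | hij
      · simp [erase_insert hbB]
      · simp only [Function.update_of_ne hij]
        have := hT i
        rwa [Function.update_of_ne hij] at this
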